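/- arXiv:1311.4387 — 2 statements merged into one kernel-verified Lean document; each statement's English description precedes it below -/
import Mathlib

section
/- For all integers p ≥ q ≥ 0 and every sequence x : ℤ → ℝ, the q-fold forward difference of the refined sequence satisfies Δ^q(S_p x) = 2^{−q}·S_{p−q}(Δ^q x), i.e. (Δ^q(S_p x))_i = 2^{−q}·(S_{p−q}(Δ^q x))_i for all i ∈ ℤ. (Equivalently, the q-th derived subdivision scheme of S_p is S_p^{[q]} = 2^{−q} S_{p−q}.) -/
/-- The Lane–Riesenfeld (B-spline) subdivision operator `S p` on real sequences. -/
noncomputable def S : ℕ → (ℤ → ℝ) → ℤ → ℝ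
  | 0, x, i => x (Int.fdiv i 2)
  | p + 1, x, i => (S p x i + S p x (i + 1)) / 2

/-- Forward difference operator. -/
noncomputable def Δ : (ℤ → ℝ) → ℤ → ℝ := fun x i => x (i + 1) - x i

lemma S_smul (p : ℕ) (c : ℝ) (x : ℤ → ℝ) (i : ℤ) :
    S p (fun j => c * x j) i = c * S p x i := by
  induction p generalizing i with
  | zero => simp [S]
  | succ p ih => simp [S, ih]; ring

lemma Δ_key (p : ℕ) (x : ℤ → ℝ) (i : ℤ) :
    Δ (S (p + 1) x) i = 2⁻¹ * S p (Δ x) i := by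
  induction p generalizing i with
  | zero =>
    have h2 : (i + 1 + 1).fdiv 2 = i.fdiv 2 + 1 := by
      rw [Int.fdiv_eq_ediv_of_nonneg _ (by norm_num), Int.fdiv_eq_ediv_of_nonneg _ (by norm_num)]
      omega
    simp only [S, Δ, h2]
    ring
  | succ p ih =>
    have : Δ (S (p + 1 + 1) x) i = (Δ (S (p + 1) x) i + Δ (S (p + 1) x) (i + 1)) / 2 := by
      simp only [S, Δ]; ring
    rw [this, ih, ih]
    simp only [S]
    ring

lemma Δ_iter_smul (q : ℕ) (c : ℝ) (x : ℤ → ℝ) (i : ℤ) :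
    Δ^[q] (fun j => c * x j) i = c * Δ^[q] x i := by
  induction q generalizing x i with
  | zero => simp
  | succ q ih =>
    rw [Function.iterate_succ_apply, Function.iterate_succ_apply]
    have : Δ (fun j => c * x j) = fun j => c * Δ x j := by
      funext j; simp [Δ]; ring
    rw [this, ih]

/-- For all `p ≥ q ≥ 0`, the `q`-fold forward difference of the refined sequence satisfies
`Δ^q (S_p x) = 2^{−q} · S_{p−q}(Δ^q x)`, i.e. the `q`-th derived scheme of `S_p` is
`2^{−q} S_{p−q}`. -/
theorem derived_scheme_of_LaneRiesenfeld (p q : ℕ) (hq : q ≤ p) (x : ℤ → ℝ) (i : ℤ) :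
    Δ^[q] (S p x) i = ((2 : ℝ)⁻¹) ^ q * S (p - q) (Δ^[q] x) i := by
  induction q generalizing p x i with
  | zero => simp
  | succ q ih =>
    obtain ⟨p', rfl⟩ : ∃ p', p = p' + 1 := ⟨p - 1, by omega⟩
    rw [Function.iterate_succ_apply]
    have hΔ : Δ (S (p' + 1) x) = fun j => 2⁻¹ * S p' (Δ x) j := by
      funext j; exact Δ_key p' x j
    rw [hΔ, Δ_iter_smul, ih p' (by omega) (Δ x) i,
      show p' + 1 - (q + 1) = p' - q from by omega,
      ← Function.iterate_succ_apply]
    ring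
end

section
/- Let P ≥ 1 be an integer, c ∈ ℝ, and let a, b : ℤ → ℝ be finitely supported masks defining subdivision operators S and T on sequences by (Sx)_i = Σ_{k∈ℤ} a_{i−2k} x_k and (Tx)_i = Σ_{k∈ℤ} b_{i−2k} x_k. Assume that both S and T exactly reproduce polynomials of degree < P with the same shift c, i.e. for every polynomial 𝔭 with deg 𝔭 < P and every i ∈ ℤ, (S(𝔭|_ℤ))_i = 𝔭(i/2 + c) = (T(𝔭|_ℤ))_i. Then there exists a constant C such that for every bounded sequence x : ℤ → ℝ, sup_{i∈ℤ} |(Sx)_i − (Tx)_i| ≤ C · sup_{i∈ℤ} |(Δ^P x)_i|. -/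
open Polynomial Finset

lemma icc_top_step {n m : ℤ} (h : n ≤ m) (f : ℤ → ℝ) :
    ∑ k ∈ Finset.Icc n m, f k = (∑ k ∈ Finset.Icc n (m - 1), f k) + f m := by
  have he : Finset.Icc n m = insert m (Finset.Icc n (m - 1)) := by
    ext k; simp only [Finset.mem_Icc, Finset.mem_insert]; omega
  rw [he, Finset.sum_insert (by simp only [Finset.mem_Icc]; omega)]
  ring

lemma exists_antideriv (P : ℕ) : ∀ q : Polynomial ℝ, q.degree < (P : WithBot ℕ) →
    ∃ p : Polynomial ℝ, p.degree < ((P + 1 : ℕ) : WithBot ℕ) ∧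
      ∀ t : ℝ, p.eval (t + 1) - p.eval t = q.eval t := by
  induction P with
  | zero =>
    intro q hq
    have hq0 : q = 0 := by
      by_contra h
      rw [Polynomial.degree_eq_natDegree h] at hq
      exact absurd hq (by exact_mod_cast Nat.not_lt_zero _)
    refine ⟨0, ?_, ?_⟩
    · simpa using (by exact_mod_cast WithBot.bot_lt_coe 1 : (⊥ : WithBot ℕ) < ((1:ℕ) : WithBot ℕ))
    · intro t; simp [hq0]
  | succ P ih =>
    intro q hq
    set L : ℝ := q.coeff P / (P + 1) with hL
    set u : Polynomial ℝ := (X + 1) ^ (P + 1) - X ^ (P + 1) with hu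
    have hu_coeff : ∀ m : ℕ, u.coeff m =
        ((P + 1).choose m : ℝ) - (if m = P + 1 then 1 else 0) := by
      intro m
      simp [hu, Polynomial.coeff_sub, Polynomial.coeff_X_add_one_pow, Polynomial.coeff_X_pow,
        eq_comm]
    have hqc : ∀ m : ℕ, P + 1 ≤ m → q.coeff m = 0 :=
      (Polynomial.degree_lt_iff_coeff_zero q (P + 1)).mp (by exact_mod_cast hq)
    set r : Polynomial ℝ := q - Polynomial.C L * u with hr
    have hrd : r.degree < (P : WithBot ℕ) := by
      rw [show ((P : ℕ) : WithBot ℕ) = ((P : ℕ) : WithBot ℕ) from rfl]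
      refine (Polynomial.degree_lt_iff_coeff_zero r P).mpr ?_
      intro m hm
      rcases eq_or_lt_of_le hm with h | h
      · subst h
        have hch : ((P + 1).choose P : ℝ) = (P : ℝ) + 1 := by
          rw [Nat.choose_succ_self_right]; push_cast; ring
        have hne : (P : ℝ) + 1 ≠ 0 := by positivity
        simp only [hr, Polynomial.coeff_sub, Polynomial.coeff_C_mul, hu_coeff,
          if_neg (by omega : ¬ P = P + 1), hL, hch]
        field_simp
        ring
      · have h1 : q.coeff m = 0 := hqc m (by omega)
        have h2 : u.coeff m = 0 := by
          rw [hu_coeff m]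
          rcases eq_or_lt_of_le (by omega : P + 1 ≤ m) with h' | h'
          · rw [if_pos h'.symm, ← h', Nat.choose_self]; norm_num
          · rw [if_neg (by omega), Nat.choose_eq_zero_of_lt h']; norm_num
        simp [hr, h1, h2]
    obtain ⟨p', hd', he'⟩ := ih r hrd
    refine ⟨Polynomial.C L * X ^ (P + 1) + p', ?_, ?_⟩
    · apply lt_of_le_of_lt (Polynomial.degree_add_le _ _)
      rw [max_lt_iff]
      constructor
      · apply lt_of_le_of_lt (Polynomial.degree_C_mul_X_pow_le _ _)
        exact_mod_cast Nat.lt_succ_self (P + 1)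
      · exact lt_trans hd' (by exact_mod_cast Nat.lt_succ_self (P + 1))
    · intro t
      have h1 := he' t
      have h2 : r.eval t = q.eval t - L * ((t + 1) ^ (P + 1) - t ^ (P + 1)) := by
        simp [hr, hu]
      simp only [Polynomial.eval_add, Polynomial.eval_mul, Polynomial.eval_C,
        Polynomial.eval_pow, Polynomial.eval_X] at h1 ⊢
      rw [h2] at h1
      linarith

lemma keyA (P : ℕ) : ∀ (L : ℕ) (n : ℤ) (c : ℤ → ℝ),
    (∀ k : ℤ, k ∉ Finset.Icc n (n + L) → c k = 0) →
    (∀ p : Polynomial ℝ, p.degree < (P : WithBot ℕ) →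
      ∑ k ∈ Finset.Icc n (n + L), c k * p.eval (k : ℝ) = 0) →
    ∀ (x : ℤ → ℝ) (D : ℝ), (∀ i : ℤ, |Δ^[P] x i| ≤ D) →
    |∑ k ∈ Finset.Icc n (n + L), c k * x k| ≤
      ((L : ℝ) + 1) ^ P * (∑ k ∈ Finset.Icc n (n + L), |c k|) * D := by
  induction P with
  | zero =>
    intro L n c hsupp hmom x D hD
    simp only [Function.iterate_zero, id] at hD
    simp only [pow_zero, one_mul]
    calc |∑ k ∈ Finset.Icc n (n + L), c k * x k|
        ≤ ∑ k ∈ Finset.Icc n (n + L), |c k * x k| := Finset.abs_sum_le_sum_abs _ _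
      _ ≤ ∑ k ∈ Finset.Icc n (n + L), |c k| * D := by
          refine Finset.sum_le_sum fun k _ => ?_
          rw [abs_mul]
          exact mul_le_mul_of_nonneg_left (hD k) (abs_nonneg _)
      _ = (∑ k ∈ Finset.Icc n (n + L), |c k|) * D := by rw [Finset.sum_mul]
  | succ P ih =>
    intro L n c hsupp hmom x D hD
    have hD0 : 0 ≤ D := le_trans (abs_nonneg _) (hD 0)
    set I := Finset.Icc n (n + (L : ℤ)) with hI
    set F : ℤ → ℝ := fun m => ∑ k ∈ Finset.Icc n m, c k with hF
    have hsum0 : ∑ k ∈ I, c k = 0 := by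
      have h := hmom 1 (by
        rw [Polynomial.degree_one]
        exact_mod_cast Nat.succ_pos P)
      simpa using h
    have hFlow : ∀ m : ℤ, m < n → F m = 0 := by
      intro m hm
      simp [hF, Finset.Icc_eq_empty (by omega : ¬ n ≤ m)]
    have hFhigh : ∀ m : ℤ, n + L ≤ m → F m = 0 := by
      intro m hm
      have h : ∑ k ∈ I, c k = ∑ k ∈ Finset.Icc n m, c k := by
        refine Finset.sum_subset ?_ ?_
        · intro k hk; rw [Finset.mem_Icc] at *; omega
        · intro k _ hk; exact hsupp k hk
      rw [hF]; dsimp only; rw [← h, hsum0]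
    have abel : ∀ y : ℤ → ℝ,
        ∑ k ∈ I, c k * y k = -∑ m ∈ I, F m * (y (m + 1) - y m) := by
      intro y
      have h1 : ∀ k ∈ I, c k * y k = F k * y k - F (k - 1) * y k := by
        intro k hk
        rw [Finset.mem_Icc] at hk
        have hFk : F k = F (k - 1) + c k := by
          have := icc_top_step hk.1 c
          simpa [hF] using this
        rw [hFk]; ring
      rw [Finset.sum_congr rfl h1, Finset.sum_sub_distrib]
      have h2 : ∑ k ∈ I, F (k - 1) * y k = ∑ m ∈ I, F m * y (m + 1) := by
        have hmap : I = (Finset.Icc (n - 1) (n + L - 1)).map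
            (addRightEmbedding (1 : ℤ)) := by
          rw [hI, Finset.map_add_right_Icc]; congr 1 <;> ring
        have hre : ∑ k ∈ I, F (k - 1) * y k
            = ∑ m ∈ Finset.Icc (n - 1) (n + L - 1), F m * y (m + 1) := by
          conv_lhs => rw [hmap]
          rw [Finset.sum_map]
          simp only [addRightEmbedding_apply, add_sub_cancel_right]
        have e1 : ∑ m ∈ Finset.Icc (n - 1) (n + L - 1), F m * y (m + 1)
            = ∑ m ∈ Finset.Icc (n - 1) (n + L), F m * y (m + 1) := by
          refine Finset.sum_subset ?_ ?_
          · intro k hk; rw [Finset.mem_Icc] at *; omega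
          · intro k hk hk'
            rw [Finset.mem_Icc] at hk; rw [Finset.mem_Icc] at hk'
            rw [hFhigh k (by omega)]; ring
        have e2 : ∑ m ∈ I, F m * y (m + 1)
            = ∑ m ∈ Finset.Icc (n - 1) (n + L), F m * y (m + 1) := by
          refine Finset.sum_subset ?_ ?_
          · intro k hk; rw [hI, Finset.mem_Icc] at *; omega
          · intro k hk hk'
            rw [Finset.mem_Icc] at hk; rw [hI, Finset.mem_Icc] at hk'
            rw [hFlow k (by omega)]; ring
        rw [hre, e1, ← e2]
      rw [h2]
      have h3 : ∑ m ∈ I, F m * (y (m + 1) - y m)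
          = (∑ m ∈ I, F m * y (m + 1)) - ∑ m ∈ I, F m * y m := by
        simp [mul_sub, Finset.sum_sub_distrib]
      rw [h3]; ring
    have hFmom : ∀ q : Polynomial ℝ, q.degree < (P : WithBot ℕ) →
        ∑ m ∈ I, F m * q.eval (m : ℝ) = 0 := by
      intro q hq
      obtain ⟨p, hpd, hpe⟩ := exists_antideriv P q hq
      have hz := abel (fun k => p.eval (k : ℝ))
      rw [hmom p (by exact_mod_cast hpd)] at hz
      have he : ∀ m ∈ I, F m * (p.eval ((m + 1 : ℤ) : ℝ) - p.eval (m : ℝ))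
          = F m * q.eval (m : ℝ) := by
        intro m _
        have := hpe (m : ℝ)
        push_cast
        rw [this]
      rw [Finset.sum_congr rfl he] at hz
      linarith
    have hSnn : 0 ≤ ∑ k ∈ I, |c k| := Finset.sum_nonneg fun k _ => abs_nonneg _
    have hFabs : ∀ m ∈ I, |F m| ≤ ∑ k ∈ I, |c k| := by
      intro m _
      calc |F m| ≤ ∑ k ∈ Finset.Icc n m, |c k| := Finset.abs_sum_le_sum_abs _ _
        _ ≤ ∑ k ∈ Finset.Icc n m ∪ I, |c k| :=
            Finset.sum_le_sum_of_subset_of_nonneg Finset.subset_union_left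
              fun k _ _ => abs_nonneg _
        _ = ∑ k ∈ I, |c k| := by
            refine (Finset.sum_subset Finset.subset_union_right ?_).symm
            intro k _ hk
            rw [abs_eq_zero]
            exact hsupp k hk
    have hx' : ∀ i : ℤ, |Δ^[P] (Δ x) i| ≤ D := by
      intro i
      have := hD i
      rwa [Function.iterate_succ_apply] at this
    have main := ih L n F
      (fun k hk => by
        rw [Finset.mem_Icc] at hk
        rcases (by omega : k < n ∨ n + L ≤ k) with h | h
        · exact hFlow k h
        · exact hFhigh k h)
      hFmom (Δ x) D hx'
    have hcard : (I.card : ℝ) = (L : ℝ) + 1 := by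
      rw [hI, Int.card_Icc]
      have : (n + L + 1 - n) = ((L : ℤ) + 1) := by ring
      rw [this]
      simp [Int.toNat_of_nonneg (by positivity : (0:ℤ) ≤ (L:ℤ) + 1)]
    have hFsum : ∑ m ∈ I, |F m| ≤ ((L : ℝ) + 1) * ∑ k ∈ I, |c k| := by
      calc ∑ m ∈ I, |F m| ≤ ∑ m ∈ I, (∑ k ∈ I, |c k|) := Finset.sum_le_sum hFabs
        _ = (I.card : ℝ) * ∑ k ∈ I, |c k| := by rw [Finset.sum_const, nsmul_eq_mul]
        _ = ((L : ℝ) + 1) * ∑ k ∈ I, |c k| := by rw [hcard]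
    rw [abel x, abs_neg]
    have hΔ : ∀ m : ℤ, x (m + 1) - x m = Δ x m := fun m => rfl
    calc |∑ m ∈ I, F m * (x (m + 1) - x m)|
        = |∑ m ∈ I, F m * Δ x m| := by simp only [hΔ]
      _ ≤ ((L : ℝ) + 1) ^ P * (∑ m ∈ I, |F m|) * D := main
      _ ≤ ((L : ℝ) + 1) ^ P * (((L : ℝ) + 1) * ∑ k ∈ I, |c k|) * D := by
          gcongr
      _ = ((L : ℝ) + 1) ^ (P + 1) * (∑ k ∈ I, |c k|) * D := by ring

/-- If two subdivision operators `S`, `T` with finitely supported masks `a`, `b` both exactly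
reproduce polynomials of degree `< P` with the same shift `c`, then
`sup_i |(Sx)_i − (Tx)_i| ≤ C · sup_i |(Δ^P x)_i|` for all bounded sequences `x`. -/
theorem mask_difference_bound (P : ℕ) (hP : 1 ≤ P) (c : ℝ) (a b : ℤ → ℝ)
    (ha : (Function.support a).Finite) (hb : (Function.support b).Finite)
    (hrepa : ∀ 𝔭 : Polynomial ℝ, 𝔭.degree < (P : WithBot ℕ) → ∀ i : ℤ,
      (∑ᶠ k : ℤ, a (i - 2 * k) * 𝔭.eval (k : ℝ)) = 𝔭.eval ((i : ℝ) / 2 + c))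
    (hrepb : ∀ 𝔭 : Polynomial ℝ, 𝔭.degree < (P : WithBot ℕ) → ∀ i : ℤ,
      (∑ᶠ k : ℤ, b (i - 2 * k) * 𝔭.eval (k : ℝ)) = 𝔭.eval ((i : ℝ) / 2 + c)) :
    ∃ C : ℝ, ∀ x : ℤ → ℝ, (∃ M : ℝ, ∀ i : ℤ, |x i| ≤ M) →
      ∀ D : ℝ, (∀ i : ℤ, |Δ^[P] x i| ≤ D) →
      ∀ i : ℤ, |(∑ᶠ k : ℤ, a (i - 2 * k) * x k) - ∑ᶠ k : ℤ, b (i - 2 * k) * x k| ≤ C * D := by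
  classical
  set s : Finset ℤ := (ha.union hb).toFinset with hs
  set N : ℕ := s.sup fun j => j.natAbs with hN
  have hbound : ∀ j : ℤ, (a j ≠ 0 ∨ b j ≠ 0) → -(N : ℤ) ≤ j ∧ j ≤ N := by
    intro j hj
    have hjs : j ∈ s := by
      rw [hs, Set.Finite.mem_toFinset]
      rcases hj with h | h
      · exact Or.inl h
      · exact Or.inr h
    have h2 : j.natAbs ≤ N := by
      simpa [hN] using Finset.le_sup (f := fun j : ℤ => j.natAbs) hjs
    omega
  set A : ℝ := ∑ j ∈ Finset.Icc (-(N : ℤ)) N, (|a j| + |b j|) with hA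
  refine ⟨((N : ℝ) + 1) ^ P * A, ?_⟩
  intro x _ D hD i
  have hD0 : 0 ≤ D := le_trans (abs_nonneg _) (hD 0)
  set n : ℤ := (i - N) / 2 with hn
  have hdiv : 2 * n ≤ i - N ∧ i - N ≤ 2 * n + 1 := by
    have h1 := Int.mul_ediv_add_emod (i - N) 2
    have h2 := Int.emod_nonneg (i - N) (by norm_num : (2:ℤ) ≠ 0)
    have h3 := Int.emod_lt_of_pos (i - N) (by norm_num : (0:ℤ) < 2)
    omega
  have hmem : ∀ k : ℤ, (a (i - 2 * k) ≠ 0 ∨ b (i - 2 * k) ≠ 0) →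
      k ∈ Finset.Icc n (n + (N : ℤ)) := by
    intro k hk
    have := hbound _ hk
    rw [Finset.mem_Icc]
    omega
  have hfa : ∀ y : ℤ → ℝ, (∑ᶠ k : ℤ, a (i - 2 * k) * y k)
      = ∑ k ∈ Finset.Icc n (n + (N : ℤ)), a (i - 2 * k) * y k := by
    intro y
    refine finsum_eq_sum_of_support_subset _ ?_
    intro k hk
    have hk' : a (i - 2 * k) ≠ 0 := by
      intro h0
      apply hk
      simp [Function.mem_support, h0] at *
    exact hmem k (Or.inl hk')
  have hfb : ∀ y : ℤ → ℝ, (∑ᶠ k : ℤ, b (i - 2 * k) * y k)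
      = ∑ k ∈ Finset.Icc n (n + (N : ℤ)), b (i - 2 * k) * y k := by
    intro y
    refine finsum_eq_sum_of_support_subset _ ?_
    intro k hk
    have hk' : b (i - 2 * k) ≠ 0 := by
      intro h0
      apply hk
      simp [Function.mem_support, h0] at *
    exact hmem k (Or.inr hk')
  set d : ℤ → ℝ := fun k => a (i - 2 * k) - b (i - 2 * k) with hd
  have hdsupp : ∀ k : ℤ, k ∉ Finset.Icc n (n + (N : ℤ)) → d k = 0 := by
    intro k hk
    rw [hd]
    by_contra h
    have : a (i - 2 * k) ≠ 0 ∨ b (i - 2 * k) ≠ 0 := by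
      by_contra h'
      push_neg at h'
      apply h
      simp [h'.1, h'.2]
    exact hk (hmem k this)
  have hdmom : ∀ p : Polynomial ℝ, p.degree < (P : WithBot ℕ) →
      ∑ k ∈ Finset.Icc n (n + (N : ℤ)), d k * p.eval (k : ℝ) = 0 := by
    intro p hp
    have e1 := (hfa (fun k => p.eval (k : ℝ))).symm.trans (hrepa p hp i)
    have e2 := (hfb (fun k => p.eval (k : ℝ))).symm.trans (hrepb p hp i)
    have : ∑ k ∈ Finset.Icc n (n + (N : ℤ)), d k * p.eval (k : ℝ)
        = (∑ k ∈ Finset.Icc n (n + (N : ℤ)), a (i - 2 * k) * p.eval (k : ℝ))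
          - ∑ k ∈ Finset.Icc n (n + (N : ℤ)), b (i - 2 * k) * p.eval (k : ℝ) := by
      rw [← Finset.sum_sub_distrib]
      refine Finset.sum_congr rfl fun k _ => ?_
      rw [hd]; ring
    rw [this, e1, e2, sub_self]
  have hgoal : (∑ᶠ k : ℤ, a (i - 2 * k) * x k) - (∑ᶠ k : ℤ, b (i - 2 * k) * x k)
      = ∑ k ∈ Finset.Icc n (n + (N : ℤ)), d k * x k := by
    rw [hfa x, hfb x, ← Finset.sum_sub_distrib]
    refine Finset.sum_congr rfl fun k _ => ?_
    rw [hd]; ring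
  rw [hgoal]
  have key := keyA P N n d hdsupp hdmom x D hD
  refine le_trans key ?_
  have hSA : ∑ k ∈ Finset.Icc n (n + (N : ℤ)), |d k| ≤ A := by
    have step1 : ∑ k ∈ Finset.Icc n (n + (N : ℤ)), |d k|
        ≤ ∑ k ∈ Finset.Icc n (n + (N : ℤ)), (|a (i - 2 * k)| + |b (i - 2 * k)|) := by
      refine Finset.sum_le_sum fun k _ => ?_
      rw [hd]
      exact abs_sub _ _
    have hinj : ∀ k1 ∈ Finset.Icc n (n + (N : ℤ)), ∀ k2 ∈ Finset.Icc n (n + (N : ℤ)),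
        i - 2 * k1 = i - 2 * k2 → k1 = k2 := by intro k1 _ k2 _ h; omega
    have step2 : ∑ k ∈ Finset.Icc n (n + (N : ℤ)), (|a (i - 2 * k)| + |b (i - 2 * k)|)
        = ∑ j ∈ (Finset.Icc n (n + (N : ℤ))).image (fun k => i - 2 * k),
            (|a j| + |b j|) := (Finset.sum_image (f := fun j => |a j| + |b j|) (g := fun k => i - 2 * k) hinj).symm
    set J := (Finset.Icc n (n + (N : ℤ))).image (fun k => i - 2 * k) with hJ
    have step3 : ∑ j ∈ J, (|a j| + |b j|)
        ≤ ∑ j ∈ J ∪ Finset.Icc (-(N : ℤ)) N, (|a j| + |b j|) :=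
      Finset.sum_le_sum_of_subset_of_nonneg Finset.subset_union_left
        fun j _ _ => by positivity
    have step4 : ∑ j ∈ J ∪ Finset.Icc (-(N : ℤ)) N, (|a j| + |b j|) = A := by
      rw [hA]
      refine (Finset.sum_subset Finset.subset_union_right ?_).symm
      intro j _ hj
      rw [Finset.mem_Icc] at hj
      have hz : a j = 0 ∧ b j = 0 := by
        by_contra h
        push_neg at h
        have : a j ≠ 0 ∨ b j ≠ 0 := by tauto
        have := hbound j this
        omega
      simp [hz.1, hz.2]
    calc ∑ k ∈ Finset.Icc n (n + (N : ℤ)), |d k| ≤ _ := step1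
      _ = _ := step2
      _ ≤ _ := step3
      _ = A := step4
  gcongr
end
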